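/- Let q : Γ → ℝ be a map satisfying |q(ab) − q(a) − q(b)| ≤ D for all a,b ∈ Γ, and suppose q is homogeneous: q(γⁿ) = n·q(γ) for all n ≥ 1. If γ = [a₁,b₁]⋯[a_g,b_g] is a product of g commutators, then |q(γ)| ≤ (2g−1)·D... in particular |q(γ)| ≤ 2g·D. -/

import Mathlib

open scoped commutatorElement

private lemma vanish_of_forall_mul {x C : ℝ}
    (h : ∀ n : ℕ, 1 ≤ n → (n : ℝ) * |x| ≤ C) : x = 0 := by
  by_contra hx
  have hx' : 0 < |x| := abs_pos.mpr hx
  obtain ⟨n, hn⟩ := exists_nat_gt (C / |x|)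
  have h1 : (↑(n + 1) : ℝ) * |x| ≤ C := h (n + 1) (by omega)
  have h2 : C / |x| < (↑(n + 1) : ℝ) := by push_cast; push_cast at hn; linarith
  have := (div_lt_iff₀ hx').mp h2
  push_cast at this
  push_cast at h1
  linarith

private lemma prod_bound {Γ : Type*} [Group Γ] (q : Γ → ℝ) (D : ℝ)
    (hq : ∀ a b : Γ, |q (a * b) - q a - q b| ≤ D) (hD : 0 ≤ D) :
    ∀ l : List Γ, l ≠ [] → (∀ c ∈ l, |q c| ≤ D) →
      |q l.prod| ≤ (2 * (l.length : ℝ) - 1) * D := by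
  intro l
  induction l with
  | nil => intro h; exact absurd rfl h
  | cons c t ih =>
    intro _ hmem
    rcases eq_or_ne t [] with rfl | ht
    · simp only [List.prod_cons, List.prod_nil, mul_one, List.length_cons,
        List.length_nil]
      have := hmem c (by simp)
      push_cast
      linarith
    · have hbt := ih ht (fun x hx => hmem x (List.mem_cons_of_mem _ hx))
      have hc := hmem c (by simp)
      have h1 := abs_le.mp (hq c t.prod)
      have hcl := neg_abs_le (q c)
      have hcr := le_abs_self (q c)
      have hpl := neg_abs_le (q t.prod)
      have hpr := le_abs_self (q t.prod)
      have hlen : (1 : ℝ) ≤ (t.length : ℝ) := by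
        have := List.length_pos_iff.mpr ht
        exact_mod_cast this
      rw [List.prod_cons, List.length_cons]
      rw [abs_le]
      push_cast
      constructor <;> linarith

theorem stmt17 {Γ : Type*} [Group Γ] (q : Γ → ℝ) (D : ℝ)
    (hq : ∀ a b : Γ, |q (a * b) - q a - q b| ≤ D)
    (hhom : ∀ γ : Γ, ∀ n : ℕ, 1 ≤ n → q (γ ^ n) = n * q γ)
    (γ : Γ) (g : ℕ) (hg : 0 < g)
    (a b : Fin g → Γ) (hγ : γ = (List.ofFn fun i => ⁅a i, b i⁆).prod) :
    |q γ| ≤ (2 * (g : ℝ) - 1) * D ∧ |q γ| ≤ 2 * (g : ℝ) * D := by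
  have hD : 0 ≤ D := le_trans (abs_nonneg _) (hq 1 1)
  have hq1 : q 1 = 0 := by
    have := hhom 1 2 (by norm_num)
    simp at this
    linarith
  have hinv : ∀ x : Γ, q x⁻¹ = -q x := by
    intro x
    have key : ∀ n : ℕ, 1 ≤ n → (n : ℝ) * |q x⁻¹ - (-q x)| ≤ D := by
      intro n hn
      have h1 := hq (x ^ n) (x⁻¹ ^ n)
      have hx : x ^ n * x⁻¹ ^ n = 1 := by
        rw [inv_pow, mul_inv_cancel]
      rw [hx, hq1, hhom x n hn, hhom x⁻¹ n hn] at h1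
      have habs : (n : ℝ) * |q x⁻¹ - (-q x)| = |(n : ℝ) * (q x⁻¹ - (-q x))| := by
        rw [abs_mul, Nat.abs_cast]
      rw [habs, abs_le]
      obtain ⟨ha, hb⟩ := abs_le.mp h1
      constructor <;> nlinarith
    have := vanish_of_forall_mul key
    linarith
  have hconj : ∀ h x : Γ, q (h * x * h⁻¹) = q x := by
    intro h x
    have key : ∀ n : ℕ, 1 ≤ n → (n : ℝ) * |q (h * x * h⁻¹) - q x| ≤ 2 * D := by
      intro n hn
      have hcp : (h * x * h⁻¹) ^ n = h * x ^ n * h⁻¹ := conj_pow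
      have h0 : q (h * x ^ n * h⁻¹) = (n : ℝ) * q (h * x * h⁻¹) := by
        rw [← hcp]; exact hhom _ n hn
      have h1 := hq h (x ^ n * h⁻¹)
      rw [← mul_assoc] at h1
      obtain ⟨h1a, h1b⟩ := abs_le.mp h1
      obtain ⟨h2a, h2b⟩ := abs_le.mp (hq (x ^ n) h⁻¹)
      have hxq := hhom x n hn
      have hih := hinv h
      have habs : (n : ℝ) * |q (h * x * h⁻¹) - q x|
          = |(n : ℝ) * (q (h * x * h⁻¹) - q x)| := by
        rw [abs_mul, Nat.abs_cast]
      rw [habs, abs_le]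
      constructor <;> nlinarith
    have := vanish_of_forall_mul key
    linarith
  have hcomm : ∀ u v : Γ, |q ⁅u, v⁆| ≤ D := by
    intro u v
    have h1 := hq (u * v * u⁻¹) v⁻¹
    have hc : q (u * v * u⁻¹) = q v := hconj u v
    have hi : q v⁻¹ = -q v := hinv v
    have he : u * v * u⁻¹ * v⁻¹ = ⁅u, v⁆ := (commutatorElement_def u v).symm
    rw [he, hc, hi] at h1
    calc |q ⁅u, v⁆| = |q ⁅u, v⁆ - q v - -q v| := by ring_nf
      _ ≤ D := h1
  set l : List Γ := List.ofFn fun i => ⁅a i, b i⁆ with hl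
  have hne : l ≠ [] := by
    rw [hl]
    simp [List.ofFn_eq_nil_iff]
    omega
  have hmem : ∀ c ∈ l, |q c| ≤ D := by
    intro c hc
    rw [hl, List.mem_ofFn] at hc
    obtain ⟨i, rfl⟩ := hc
    exact hcomm _ _
  have hlen : (l.length : ℝ) = g := by simp [hl]
  have hmain := prod_bound q D hq hD l hne hmem
  rw [hlen, ← hγ] at hmain
  refine ⟨hmain, hmain.trans ?_⟩
  nlinarith
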